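/- Let A3, A4, B2 be n×n real matrices. Let [l_x,u_x] ⊇ [l_x',u_x'] and [l_y,u_y] ⊇ [l_y',u_y'] be nested boxes in ℝⁿ with radii p_x = (u_x − l_x)/2, p_x' = (u_x' − l_x')/2, p_y = (u_y − l_y)/2, p_y' = (u_y' − l_y')/2, and let [l_w,u_w] be a box in ℝⁿ. Define the prior box 𝒴prior = Ψ(A3)[l_x,u_x] ⊕ Ψ(A4)[l_y,u_y] ⊕ Ψ(B2)[l_w,u_w] and the posterior box 𝒴post = Ψ(A3)[l_x',u_x'] ⊕ Ψ(A4)[l_y',u_y'] ⊕ Ψ(B2)[l_w,u_w]. Then 𝒴post ⊆ 𝒴prior and the reduction in surrogate volume satisfies Vol̄(𝒴prior) − Vol̄(𝒴post) = 2‖ |A3|(p_x − p_x') + |A4|(p_y − p_y') ‖₁. -/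
import Mathlib


open Matrix Finset

/-- Entrywise absolute value of a matrix. -/
noncomputable def matAbs {n : ℕ} (A : Matrix (Fin n) (Fin n) ℝ) :
    Matrix (Fin n) (Fin n) ℝ := Matrix.of fun i j => |A i j|

/-- A⁺ = (A + |A|)/2. -/
noncomputable def matPos {n : ℕ} (A : Matrix (Fin n) (Fin n) ℝ) :
    Matrix (Fin n) (Fin n) ℝ := Matrix.of fun i j => (A i j + |A i j|) / 2

/-- A⁻ = (A − |A|)/2. -/
noncomputable def matNeg {n : ℕ} (A : Matrix (Fin n) (Fin n) ℝ) :
    Matrix (Fin n) (Fin n) ℝ := Matrix.of fun i j => (A i j - |A i j|) / 2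

/-- Lower endpoint of Ψ(A)[l,u]. -/
noncomputable def psiLo {n : ℕ} (A : Matrix (Fin n) (Fin n) ℝ) (l u : Fin n → ℝ) :
    Fin n → ℝ := (matPos A).mulVec l + (matNeg A).mulVec u

/-- Upper endpoint of Ψ(A)[l,u]. -/
noncomputable def psiHi {n : ℕ} (A : Matrix (Fin n) (Fin n) ℝ) (l u : Fin n → ℝ) :
    Fin n → ℝ := (matNeg A).mulVec l + (matPos A).mulVec u

/-- Surrogate volume of the box [l,u]: Σᵢ (u i − l i). -/
noncomputable def volBar {n : ℕ} (l u : Fin n → ℝ) : ℝ := ∑ i, (u i - l i)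

/-- 1-norm of a vector: Σᵢ |v i|. -/
noncomputable def norm1 {n : ℕ} (v : Fin n → ℝ) : ℝ := ∑ i, |v i|

section AuxLemmas

variable {n : ℕ}

lemma matPos_nonneg (A : Matrix (Fin n) (Fin n) ℝ) (i j : Fin n) : 0 ≤ matPos A i j := by
  simp only [matPos, Matrix.of_apply]
  have := neg_abs_le (A i j)
  linarith

lemma matNeg_nonpos (A : Matrix (Fin n) (Fin n) ℝ) (i j : Fin n) : matNeg A i j ≤ 0 := by
  simp only [matNeg, Matrix.of_apply]
  have := le_abs_self (A i j)
  linarith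

lemma psiLo_mono (A : Matrix (Fin n) (Fin n) ℝ) {l u l' u' : Fin n → ℝ}
    (h1 : l ≤ l') (h2 : u' ≤ u) : psiLo A l u ≤ psiLo A l' u' := by
  intro i
  simp only [psiLo, Pi.add_apply, Matrix.mulVec, dotProduct]
  rw [← Finset.sum_add_distrib, ← Finset.sum_add_distrib]
  refine Finset.sum_le_sum fun j _ => ?_
  have hpos := matPos_nonneg A i j
  have hneg := matNeg_nonpos A i j
  have := mul_le_mul_of_nonneg_left (h1 j) hpos
  have := mul_le_mul_of_nonpos_left (h2 j) hneg
  linarith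

lemma psiHi_mono (A : Matrix (Fin n) (Fin n) ℝ) {l u l' u' : Fin n → ℝ}
    (h1 : l ≤ l') (h2 : u' ≤ u) : psiHi A l' u' ≤ psiHi A l u := by
  intro i
  simp only [psiHi, Pi.add_apply, Matrix.mulVec, dotProduct]
  rw [← Finset.sum_add_distrib, ← Finset.sum_add_distrib]
  refine Finset.sum_le_sum fun j _ => ?_
  have hpos := matPos_nonneg A i j
  have hneg := matNeg_nonpos A i j
  have := mul_le_mul_of_nonneg_left (h2 j) hpos
  have := mul_le_mul_of_nonpos_left (h1 j) hneg
  linarith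

lemma psiHi_sub_psiLo (A : Matrix (Fin n) (Fin n) ℝ) (l u : Fin n → ℝ) :
    psiHi A l u - psiLo A l u = (matAbs A).mulVec (u - l) := by
  funext i
  simp only [psiHi, psiLo, Pi.sub_apply, Pi.add_apply, Matrix.mulVec, dotProduct,
    matPos, matNeg, matAbs, Matrix.of_apply]
  rw [← Finset.sum_add_distrib, ← Finset.sum_add_distrib, ← Finset.sum_sub_distrib]
  refine Finset.sum_congr rfl fun j _ => ?_
  ring

lemma mulVec_abs_nonneg (A : Matrix (Fin n) (Fin n) ℝ) {v : Fin n → ℝ} (hv : 0 ≤ v) (i : Fin n) :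
    0 ≤ (matAbs A).mulVec v i := by
  simp only [Matrix.mulVec, dotProduct, matAbs, Matrix.of_apply]
  exact Finset.sum_nonneg fun j _ => mul_nonneg (abs_nonneg _) (hv j)

end AuxLemmas

/-- Exact uncertainty-reduction identity of Theorem 1: the posterior box is
nested in the prior box and the surrogate-volume reduction equals
2‖|A3|(p_x − p_x') + |A4|(p_y − p_y')‖₁. -/
theorem uncertainty_reduction_eq {n : ℕ}
    (A3 A4 B2 : Matrix (Fin n) (Fin n) ℝ)
    (lx ux lx' ux' ly uy ly' uy' lw uw : Fin n → ℝ)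
    (hx₁ : lx ≤ lx') (hx₂ : ux' ≤ ux) (hx' : lx' ≤ ux')
    (hy₁ : ly ≤ ly') (hy₂ : uy' ≤ uy) (hy' : ly' ≤ uy')
    (hw : lw ≤ uw)
    (px px' py py' : Fin n → ℝ)
    (hpx : px = (ux - lx) / 2) (hpx' : px' = (ux' - lx') / 2)
    (hpy : py = (uy - ly) / 2) (hpy' : py' = (uy' - ly') / 2)
    (loPrior hiPrior loPost hiPost : Fin n → ℝ)
    (hloPrior : loPrior = psiLo A3 lx ux + psiLo A4 ly uy + psiLo B2 lw uw)
    (hhiPrior : hiPrior = psiHi A3 lx ux + psiHi A4 ly uy + psiHi B2 lw uw)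
    (hloPost : loPost = psiLo A3 lx' ux' + psiLo A4 ly' uy' + psiLo B2 lw uw)
    (hhiPost : hiPost = psiHi A3 lx' ux' + psiHi A4 ly' uy' + psiHi B2 lw uw) :
    Set.Icc loPost hiPost ⊆ Set.Icc loPrior hiPrior ∧
    volBar loPrior hiPrior - volBar loPost hiPost
      = 2 * norm1 ((matAbs A3).mulVec (px - px') + (matAbs A4).mulVec (py - py')) := by
  constructor
  · apply Set.Icc_subset_Icc
    · rw [hloPrior, hloPost]
      intro i
      have h3 := psiLo_mono A3 hx₁ hx₂ i
      have h4 := psiLo_mono A4 hy₁ hy₂ i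
      simp only [Pi.add_apply]
      linarith
    · rw [hhiPrior, hhiPost]
      intro i
      have h3 := psiHi_mono A3 hx₁ hx₂ i
      have h4 := psiHi_mono A4 hy₁ hy₂ i
      simp only [Pi.add_apply]
      linarith
  · -- volume identity
    have hxnn : (0 : Fin n → ℝ) ≤ px - px' := by
      intro j
      simp only [hpx, hpx', Pi.sub_apply, Pi.div_apply, Pi.zero_apply, Pi.ofNat_apply]
      have := hx₁ j; have := hx₂ j; linarith
    have hynn : (0 : Fin n → ℝ) ≤ py - py' := by
      intro j
      simp only [hpy, hpy', Pi.sub_apply, Pi.div_apply, Pi.zero_apply, Pi.ofNat_apply]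
      have := hy₁ j; have := hy₂ j; linarith
    have h3 := psiHi_sub_psiLo A3 lx ux
    have h4 := psiHi_sub_psiLo A4 ly uy
    have hB := psiHi_sub_psiLo B2 lw uw
    have h3' := psiHi_sub_psiLo A3 lx' ux'
    have h4' := psiHi_sub_psiLo A4 ly' uy'
    have key : ∀ i, hiPrior i - loPrior i - (hiPost i - loPost i)
        = 2 * ((matAbs A3).mulVec (px - px') i + (matAbs A4).mulVec (py - py') i) := by
      intro i
      have e3 := congrFun h3 i
      have e4 := congrFun h4 i
      have eB := congrFun hB i
      have e3' := congrFun h3' i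
      have e4' := congrFun h4' i
      simp only [Pi.sub_apply] at e3 e4 eB e3' e4'
      have hx2 : (ux - lx) - (ux' - lx') = (2:ℝ) • (px - px') := by
        rw [hpx, hpx']; funext j; simp; ring
      have hy2 : (uy - ly) - (uy' - ly') = (2:ℝ) • (py - py') := by
        rw [hpy, hpy']; funext j; simp; ring
      have l3 : (matAbs A3).mulVec (ux - lx) i - (matAbs A3).mulVec (ux' - lx') i
          = 2 * (matAbs A3).mulVec (px - px') i := by
        have := congrFun (congrArg (Matrix.mulVec (matAbs A3)) hx2) i
        rw [Matrix.mulVec_smul] at this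
        have h := Matrix.mulVec_sub (matAbs A3) (ux - lx) (ux' - lx')
        have h' := congrFun h i
        simp only [Pi.sub_apply] at h'
        simp only [Pi.smul_apply, smul_eq_mul] at this
        rw [← h'] ; rw [this]
      have l4 : (matAbs A4).mulVec (uy - ly) i - (matAbs A4).mulVec (uy' - ly') i
          = 2 * (matAbs A4).mulVec (py - py') i := by
        have := congrFun (congrArg (Matrix.mulVec (matAbs A4)) hy2) i
        rw [Matrix.mulVec_smul] at this
        have h := Matrix.mulVec_sub (matAbs A4) (uy - ly) (uy' - ly')
        have h' := congrFun h i
        simp only [Pi.sub_apply] at h'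
        simp only [Pi.smul_apply, smul_eq_mul] at this
        rw [← h'] ; rw [this]
      simp only [hloPrior, hhiPrior, hloPost, hhiPost, Pi.add_apply]
      have expand : (psiHi A3 lx ux i + psiHi A4 ly uy i + psiHi B2 lw uw i)
          - (psiLo A3 lx ux i + psiLo A4 ly uy i + psiLo B2 lw uw i)
          - ((psiHi A3 lx' ux' i + psiHi A4 ly' uy' i + psiHi B2 lw uw i)
            - (psiLo A3 lx' ux' i + psiLo A4 ly' uy' i + psiLo B2 lw uw i))
          = ((matAbs A3).mulVec (ux - lx) i - (matAbs A3).mulVec (ux' - lx') i)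
            + ((matAbs A4).mulVec (uy - ly) i - (matAbs A4).mulVec (uy' - ly') i) := by
        linarith [e3, e4, eB, e3', e4']
      rw [expand, l3, l4]; ring
    have habs : ∀ i, |(matAbs A3).mulVec (px - px') i + (matAbs A4).mulVec (py - py') i|
        = (matAbs A3).mulVec (px - px') i + (matAbs A4).mulVec (py - py') i := by
      intro i
      exact abs_of_nonneg (add_nonneg (mulVec_abs_nonneg A3 hxnn i) (mulVec_abs_nonneg A4 hynn i))
    simp only [volBar, norm1, Pi.add_apply]
    rw [← Finset.sum_sub_distrib, Finset.mul_sum]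
    refine Finset.sum_congr rfl fun i _ => ?_
    rw [habs i]
    exact key i
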